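/- Let $A = \bigoplus_{n\geq 0} A(n)$ be a graded $K$-algebra which is a domain with $\dim_K A(n) < \infty$ for all $n$, and suppose that for every nonzero $L \in A(1)$ the annihilator of the left module $A/AL$ is a prime ideal. Then the map $A(1)\setminus\{0\} \to \mathrm{Spec}\,A$, $L \mapsto \mathrm{Ann}_A(A/AL)$, is continuous, where $\mathrm{Spec}\,A$ carries the Jacobson (Zariski) topology with closed sets $V(I) = \{P : I \subseteq P\}$. -/

import Mathlib

open Module Matrix DirectSum

lemma aux_exists_det_ne_zero {K : Type*} [Field K] {p q : ℕ} (v : Fin p → (Fin q → K))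
    (hv : LinearIndependent K v) :
    ∃ s : Fin p → Fin q, (Matrix.of fun i j => v j (s i)).det ≠ 0 := by
  classical
  set B : Matrix (Fin q) (Fin p) K := Matrix.of fun i j => v j i with hB
  have hBt : LinearIndependent K (fun j => Bᵀ j) := by
    convert hv using 1
    rfl
  have hrk : B.rank = p := by
    rw [← Matrix.rank_transpose]
    simpa using hBt.rank_matrix (M := Bᵀ)
  have hspan : Submodule.span K (Set.range B) = ⊤ := by
    apply Submodule.eq_top_of_finrank_eq
    exact (Matrix.rank_eq_finrank_span_row B).symm.trans (hrk.trans (finrank_fin_fun K).symm)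
  obtain ⟨t, hts, htsp, hti⟩ := exists_linearIndependent K (Set.range (B : Fin q → Fin p → K))
  rw [hspan] at htsp
  let bas : Basis t K (Fin p → K) := Basis.mk hti (by rw [Subtype.range_coe, htsp])
  haveI : Fintype t := FiniteDimensional.fintypeBasisIndex bas
  have hcard : Fintype.card t = p := by
    have := Module.finrank_eq_card_basis bas
    rw [finrank_fin_fun] at this
    omega
  let e : Fin p ≃ t := (Fintype.equivFinOfCardEq hcard).symm
  have hchoice : ∀ i : Fin p, ∃ idx : Fin q, B idx = ((e i : _) : Fin p → K) := by
    intro i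
    exact hts (e i).2
  choose s hs using hchoice
  refine ⟨s, ?_⟩
  have hrows : LinearIndependent K (fun i => (Matrix.of fun i j => v j (s i)) i) := by
    have : (fun i => (Matrix.of fun i j => v j (s i)) i) = fun i => (bas.reindex e.symm) i := by
      funext i
      simp only [Basis.reindex_apply, Equiv.symm_symm, bas, Basis.mk_apply]
      rw [← hs i]
      rfl
    rw [this]
    exact (bas.reindex e.symm).linearIndependent
  have := Matrix.linearIndependent_rows_iff_isUnit.mp hrows
  rw [Matrix.isUnit_iff_isUnit_det, isUnit_iff_ne_zero] at this
  exact this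

lemma aux_mem_span_iff_det {K : Type*} [Field K] {p q : ℕ} (v : Fin p → (Fin q → K))
    (hv : LinearIndependent K v) (w : Fin q → K) :
    w ∈ Submodule.span K (Set.range v) ↔
      ∀ s : Fin (p+1) → Fin q,
        (Matrix.of fun i j => (Fin.snoc v w : Fin (p+1) → Fin q → K) j (s i)).det = 0 := by
  classical
  constructor
  · intro hw s
    obtain ⟨a, ha⟩ := (Finsupp.mem_span_range_iff_exists_finsupp).mp hw
    rw [← Matrix.exists_mulVec_eq_zero_iff]
    refine ⟨Fin.snoc (fun j => a j) (-1), ?_, ?_⟩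
    · intro h
      have := congr_fun h (Fin.last p)
      simp [Fin.snoc_last] at this
    · funext i
      simp only [Matrix.mulVec, dotProduct, Matrix.of_apply, Pi.zero_apply]
      rw [Fin.sum_univ_castSucc]
      simp only [Fin.snoc_castSucc, Fin.snoc_last]
      have ha' : ∑ j : Fin p, a j • v j = w := by
        rw [← ha]
        exact (Finsupp.sum_fintype a (fun i c => c • v i) (fun i => zero_smul K _)).symm
      have hc := congr_fun ha' (s i)
      simp only [Finset.sum_apply, Pi.smul_apply, smul_eq_mul] at hc
      rw [Finset.sum_congr rfl fun j _ => mul_comm (v j (s i)) (a j), hc]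
      ring
  · intro hdet
    by_cases hsnoc : LinearIndependent K (Fin.snoc v w : Fin (p+1) → Fin q → K)
    · obtain ⟨s, hs⟩ := aux_exists_det_ne_zero _ hsnoc
      exact absurd (hdet s) hs
    · obtain ⟨g, hg0, i0, hi0⟩ := Fintype.not_linearIndependent_iff.mp hsnoc
      have hglast : g (Fin.last p) ≠ 0 := by
        intro hlast
        rw [Fin.sum_univ_castSucc] at hg0
        simp only [Fin.snoc_castSucc, Fin.snoc_last, hlast, zero_smul, add_zero] at hg0
        have hall : ∀ j : Fin p, g j.castSucc = 0 :=
          Fintype.linearIndependent_iff.mp hv _ hg0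
        rcases Fin.eq_castSucc_or_eq_last i0 with ⟨j, rfl⟩ | rfl
        · exact hi0 (hall j)
        · exact hi0 hlast
      have hw : w = (-(g (Fin.last p))⁻¹) • ∑ j : Fin p, g j.castSucc • v j := by
        rw [Fin.sum_univ_castSucc] at hg0
        simp only [Fin.snoc_castSucc, Fin.snoc_last] at hg0
        have h2 : g (Fin.last p) • w = - ∑ j : Fin p, g j.castSucc • v j := by
          rw [eq_neg_iff_add_eq_zero, add_comm]; exact hg0
        rw [neg_smul, ← smul_neg, ← h2, inv_smul_smul₀ hglast]
      rw [hw]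
      exact Submodule.smul_mem _ _ (Submodule.sum_mem _ fun j _ =>
        Submodule.smul_mem _ _ (Submodule.subset_span ⟨j, rfl⟩))

noncomputable def auxMul {K A : Type*} [Field K] [Ring A] [Algebra K A]
    (𝒜 : ℕ → Submodule K A) [GradedAlgebra 𝒜] (m : ℕ) (Lv : 𝒜 1) : 𝒜 m →ₗ[K] 𝒜 (m+1) where
  toFun y := ⟨(y : A) * (Lv : A), SetLike.mul_mem_graded y.2 Lv.2⟩
  map_add' y z := by ext; simp [add_mul]
  map_smul' t y := by ext; simp [smul_mul_assoc]

lemma auxMul_apply {K A : Type*} [Field K] [Ring A] [Algebra K A]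
    (𝒜 : ℕ → Submodule K A) [GradedAlgebra 𝒜] (m : ℕ) (Lv : 𝒜 1) (y : 𝒜 m) :
    (auxMul 𝒜 m Lv y : A) = (y : A) * (Lv : A) := rfl

lemma aux_decompose_mul_zero {K A : Type*} [Field K] [Ring A] [Algebra K A]
    (𝒜 : ℕ → Submodule K A) [GradedAlgebra 𝒜] {L : A} (hL : L ∈ 𝒜 1) (a : A) :
    (DirectSum.decompose 𝒜 (a * L) 0 : A) = 0 := by
  induction a using DirectSum.Decomposition.inductionOn 𝒜 with
  | zero => simp
  | homogeneous x =>
    rename_i i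
    have hx : (x : A) * L ∈ 𝒜 (i + 1) := SetLike.mul_mem_graded x.2 hL
    rw [DirectSum.decompose_of_mem_ne 𝒜 hx (by omega)]
  | add x y hx hy =>
    rw [add_mul, DirectSum.decompose_add]
    simp only [DirectSum.add_apply, Submodule.coe_add, hx, hy, add_zero]

lemma aux_decompose_mul_succ {K A : Type*} [Field K] [Ring A] [Algebra K A]
    (𝒜 : ℕ → Submodule K A) [GradedAlgebra 𝒜] {L : A} (hL : L ∈ 𝒜 1) (a : A) (m : ℕ) :
    (DirectSum.decompose 𝒜 (a * L) (m+1) : A) = (DirectSum.decompose 𝒜 a m : A) * L := by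
  induction a using DirectSum.Decomposition.inductionOn 𝒜 with
  | zero => simp
  | homogeneous x =>
    rename_i i
    have hx : (x : A) * L ∈ 𝒜 (i + 1) := SetLike.mul_mem_graded x.2 hL
    by_cases h : i = m
    · subst h
      rw [DirectSum.decompose_of_mem_same 𝒜 hx, DirectSum.decompose_of_mem_same 𝒜 x.2]
    · rw [DirectSum.decompose_of_mem_ne 𝒜 hx (by omega),
        DirectSum.decompose_of_mem_ne 𝒜 x.2 h, zero_mul]
  | add x y hx hy =>
    rw [add_mul, DirectSum.decompose_add, DirectSum.decompose_add]
    simp only [DirectSum.add_apply, Submodule.coe_add, hx, hy, add_mul]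

lemma aux_graded_factor {K A : Type*} [Field K] [Ring A] [Algebra K A]
    (𝒜 : ℕ → Submodule K A) [GradedAlgebra 𝒜] {L : A} (hL : L ∈ 𝒜 1) (G : A) :
    (∃ a : A, a * L = G) ↔
      ((DirectSum.decompose 𝒜 G 0 : A) = 0 ∧
        ∀ m : ℕ, ∃ y, y ∈ 𝒜 m ∧ y * L = (DirectSum.decompose 𝒜 G (m+1) : A)) := by
  classical
  constructor
  · rintro ⟨a, rfl⟩
    refine ⟨aux_decompose_mul_zero 𝒜 hL a, fun m => ⟨(DirectSum.decompose 𝒜 a m : A),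
      SetLike.coe_mem _, (aux_decompose_mul_succ 𝒜 hL a m).symm⟩⟩
  · rintro ⟨h0, h⟩
    choose y hy1 hy2 using h
    set S := (DirectSum.decompose 𝒜 G).support with hS
    refine ⟨∑ n ∈ S.erase 0, y (n - 1), ?_⟩
    rw [Finset.sum_mul]
    have key : ∀ n ∈ S.erase 0, y (n - 1) * L = (DirectSum.decompose 𝒜 G n : A) := by
      intro n hn
      have hn0 : n ≠ 0 := Finset.ne_of_mem_erase hn
      have : n - 1 + 1 = n := Nat.succ_pred_eq_of_pos (Nat.pos_of_ne_zero hn0)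
      rw [hy2 (n - 1), this]
    rw [Finset.sum_congr rfl key]
    rw [Finset.sum_erase (f := fun n => (DirectSum.decompose 𝒜 G n : A)) S h0]
    exact DirectSum.sum_support_decompose 𝒜 G

noncomputable def auxBasis {K A : Type*} [Field K] [Ring A] [Algebra K A]
    (𝒜 : ℕ → Submodule K A) (hfin : ∀ n, FiniteDimensional K (𝒜 n)) (n : ℕ) :
    Basis (Fin (finrank K (𝒜 n))) K (𝒜 n) :=
  haveI := hfin n
  Module.finBasis K (𝒜 n)

lemma aux_core {K A : Type*} [Field K] [Ring A] [IsDomain A] [Algebra K A]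
    (𝒜 : ℕ → Submodule K A) [GradedAlgebra 𝒜] (hfin : ∀ n, FiniteDimensional K (𝒜 n))
    (m : ℕ) (Lv : 𝒜 1) (hL : (Lv : A) ≠ 0) (w : 𝒜 (m+1)) :
    (∃ y : 𝒜 m, auxMul 𝒜 m Lv y = w) ↔
      ∀ s : Fin (finrank K (𝒜 m) + 1) → Fin (finrank K (𝒜 (m+1))),
        (Matrix.of fun i j => (Fin.snoc
            (fun j' => (auxBasis 𝒜 hfin (m+1)).equivFun
              (auxMul 𝒜 m Lv ((auxBasis 𝒜 hfin m) j')))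
            ((auxBasis 𝒜 hfin (m+1)).equivFun w) :
            Fin (finrank K (𝒜 m)+1) → Fin (finrank K (𝒜 (m+1))) → K) j (s i)).det = 0 := by
  letI := hfin m; letI := hfin (m+1)
  set T := auxMul 𝒜 m Lv with hT
  set bV := auxBasis 𝒜 hfin m
  set bW := auxBasis 𝒜 hfin (m+1)
  have hTinj : Function.Injective T := by
    intro y z h
    have : ((y : A) - (z : A)) * (Lv : A) = 0 := by
      rw [sub_mul, sub_eq_zero, ← auxMul_apply 𝒜 m Lv, ← auxMul_apply 𝒜 m Lv, ← hT, h]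
    rcases mul_eq_zero.mp this with h' | h'
    · exact Subtype.ext (sub_eq_zero.mp h')
    · exact absurd h' hL
  set v : Fin (finrank K (𝒜 m)) → (Fin (finrank K (𝒜 (m+1))) → K) :=
    fun j => bW.equivFun (T (bV j)) with hv_def
  have hv : LinearIndependent K v := by
    have h1 : LinearIndependent K (⇑(bW.equivFun.toLinearMap ∘ₗ T) ∘ ⇑bV) :=
      bV.linearIndependent.map' (bW.equivFun.toLinearMap ∘ₗ T)
        (LinearMap.ker_eq_bot.mpr (bW.equivFun.injective.comp hTinj))
    exact h1
  have hmem : (∃ y : 𝒜 m, T y = w) ↔ bW.equivFun w ∈ Submodule.span K (Set.range v) := by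
    have hrange : Submodule.span K (Set.range v) =
        Submodule.map (bW.equivFun.toLinearMap ∘ₗ T) ⊤ := by
      rw [← bV.span_eq, ← Submodule.span_image]
      congr 1
      rw [← Set.range_comp]
      rfl
    rw [hrange, Submodule.map_comp, Submodule.map_top]
    rw [Submodule.mem_map_equiv]
    simp only [LinearEquiv.symm_apply_apply]
    constructor
    · rintro ⟨y, hy⟩; exact ⟨y, hy⟩
    · rintro ⟨y, hy⟩; exact ⟨y, hy⟩
  rw [hmem, aux_mem_span_iff_det v hv (bW.equivFun w)]

noncomputable def auxPolyCol {K A : Type*} [Field K] [Ring A] [Algebra K A]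
    (𝒜 : ℕ → Submodule K A) [GradedAlgebra 𝒜] (hfin : ∀ n, FiniteDimensional K (𝒜 n))
    {d : ℕ} (b : Basis (Fin d) K (𝒜 1)) (m : ℕ) (w : 𝒜 (m+1)) :
    Fin (finrank K (𝒜 m) + 1) → Fin (finrank K (𝒜 (m+1))) → MvPolynomial (Fin d) K :=
  Fin.snoc
    (fun j i => ∑ k, MvPolynomial.X k *
      MvPolynomial.C ((auxBasis 𝒜 hfin (m+1)).equivFun
        (auxMul 𝒜 m (b k) (auxBasis 𝒜 hfin m j)) i))
    (fun i => MvPolynomial.C ((auxBasis 𝒜 hfin (m+1)).equivFun w i))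

lemma auxMul_sum {K A : Type*} [Field K] [Ring A] [Algebra K A]
    (𝒜 : ℕ → Submodule K A) [GradedAlgebra 𝒜] (m : ℕ) {d : ℕ}
    (b : Basis (Fin d) K (𝒜 1)) (c : Fin d → K) (y : 𝒜 m) :
    auxMul 𝒜 m (∑ k, c k • b k) y = ∑ k, c k • auxMul 𝒜 m (b k) y := by
  apply Subtype.ext
  rw [auxMul_apply]
  push_cast
  rw [Finset.mul_sum]
  congr 1
  funext k
  rw [mul_smul_comm]
  rfl

lemma auxPolyCol_eval {K A : Type*} [Field K] [Ring A] [Algebra K A]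
    (𝒜 : ℕ → Submodule K A) [GradedAlgebra 𝒜] (hfin : ∀ n, FiniteDimensional K (𝒜 n))
    {d : ℕ} (b : Basis (Fin d) K (𝒜 1)) (m : ℕ) (w : 𝒜 (m+1)) (c : Fin d → K)
    (j : Fin (finrank K (𝒜 m) + 1)) (i : Fin (finrank K (𝒜 (m+1)))) :
    MvPolynomial.eval c (auxPolyCol 𝒜 hfin b m w j i) =
      (Fin.snoc
        (fun j' => (auxBasis 𝒜 hfin (m+1)).equivFun
          (auxMul 𝒜 m (∑ k, c k • b k) ((auxBasis 𝒜 hfin m) j')))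
        ((auxBasis 𝒜 hfin (m+1)).equivFun w) :
        Fin (finrank K (𝒜 m)+1) → Fin (finrank K (𝒜 (m+1))) → K) j i := by
  letI := hfin m; letI := hfin (m+1)
  induction j using Fin.lastCases with
  | last =>
    simp only [auxPolyCol, Fin.snoc_last, MvPolynomial.eval_C]
  | cast j' =>
    simp only [auxPolyCol, Fin.snoc_castSucc]
    rw [auxMul_sum 𝒜 m b c]
    rw [map_sum]
    simp only [Finset.sum_apply, map_sum, MvPolynomial.eval_mul, MvPolynomial.eval_X,
      MvPolynomial.eval_C, LinearEquiv.map_smul, Pi.smul_apply, smul_eq_mul]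

noncomputable def auxIdeal1 {K A : Type*} [Field K] [Ring A] [Algebra K A]
    (𝒜 : ℕ → Submodule K A) [GradedAlgebra 𝒜] (hfin : ∀ n, FiniteDimensional K (𝒜 n))
    {d : ℕ} (b : Basis (Fin d) K (𝒜 1)) (m : ℕ) (w : 𝒜 (m+1)) :
    Ideal (MvPolynomial (Fin d) K) :=
  Ideal.span (Set.range fun s : Fin (finrank K (𝒜 m) + 1) → Fin (finrank K (𝒜 (m+1))) =>
    (Matrix.of fun i j => auxPolyCol 𝒜 hfin b m w j (s i)).det)

open Classical in
noncomputable def auxIdealG {K A : Type*} [Field K] [Ring A] [Algebra K A]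
    (𝒜 : ℕ → Submodule K A) [GradedAlgebra 𝒜] (hfin : ∀ n, FiniteDimensional K (𝒜 n))
    {d : ℕ} (b : Basis (Fin d) K (𝒜 1)) (G : A) : Ideal (MvPolynomial (Fin d) K) :=
  (if (DirectSum.decompose 𝒜 G 0 : A) = 0 then ⊥ else ⊤) ⊔
    ⨆ m : ℕ, auxIdeal1 𝒜 hfin b m (DirectSum.decompose 𝒜 G (m+1))

lemma auxIdealG_spec {K A : Type*} [Field K] [Ring A] [IsDomain A] [Algebra K A]
    (𝒜 : ℕ → Submodule K A) [GradedAlgebra 𝒜] (hfin : ∀ n, FiniteDimensional K (𝒜 n))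
    {d : ℕ} (b : Basis (Fin d) K (𝒜 1)) (c : Fin d → K)
    (hc : ((∑ i, c i • b i : 𝒜 1) : A) ≠ 0) (G : A) :
    auxIdealG 𝒜 hfin b G ≤ RingHom.ker (MvPolynomial.eval c) ↔
      (∃ a : A, a * ((∑ i, c i • b i : 𝒜 1) : A) = G) := by
  classical
  set Lv : 𝒜 1 := ∑ i, c i • b i with hLv
  rw [aux_graded_factor 𝒜 Lv.2 G]
  rw [auxIdealG, sup_le_iff]
  have h1 : ((if (DirectSum.decompose 𝒜 G 0 : A) = 0 then (⊥ : Ideal (MvPolynomial (Fin d) K))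
      else ⊤) ≤ RingHom.ker (MvPolynomial.eval c)) ↔ (DirectSum.decompose 𝒜 G 0 : A) = 0 := by
    split_ifs with h0
    · simp [h0, bot_le]
    · simp only [h0, iff_false, top_le_iff]
      intro htop
      have h1' : (1 : MvPolynomial (Fin d) K) ∈ RingHom.ker (MvPolynomial.eval c) := by
        rw [htop]; trivial
      simpa using h1'
  rw [h1, iSup_le_iff]
  apply and_congr Iff.rfl
  apply forall_congr'
  intro m
  rw [auxIdeal1, Ideal.span_le, Set.range_subset_iff]
  have hdet : ∀ s : Fin (finrank K (𝒜 m) + 1) → Fin (finrank K (𝒜 (m+1))),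
      ((Matrix.of fun i j =>
          auxPolyCol 𝒜 hfin b m (DirectSum.decompose 𝒜 G (m+1)) j (s i)).det ∈
        RingHom.ker (MvPolynomial.eval c)) ↔
      ((Matrix.of fun i j => (Fin.snoc
          (fun j' => (auxBasis 𝒜 hfin (m+1)).equivFun
            (auxMul 𝒜 m Lv (auxBasis 𝒜 hfin m j')))
          ((auxBasis 𝒜 hfin (m+1)).equivFun (DirectSum.decompose 𝒜 G (m+1))) :
          Fin (finrank K (𝒜 m)+1) → Fin (finrank K (𝒜 (m+1))) → K) j (s i)).det = 0) := by
    intro s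
    rw [RingHom.mem_ker, RingHom.map_det, RingHom.mapMatrix_apply]
    have : ((Matrix.of fun i j =>
        auxPolyCol 𝒜 hfin b m (DirectSum.decompose 𝒜 G (m+1)) j (s i)).map
          (MvPolynomial.eval c)) =
        (Matrix.of fun i j => (Fin.snoc
          (fun j' => (auxBasis 𝒜 hfin (m+1)).equivFun
            (auxMul 𝒜 m Lv (auxBasis 𝒜 hfin m j')))
          ((auxBasis 𝒜 hfin (m+1)).equivFun (DirectSum.decompose 𝒜 G (m+1))) :
          Fin (finrank K (𝒜 m)+1) → Fin (finrank K (𝒜 (m+1))) → K) j (s i)) := by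
      ext i j
      exact auxPolyCol_eval 𝒜 hfin b m (DirectSum.decompose 𝒜 G (m+1)) c j (s i)
    rw [this]
  simp only [SetLike.mem_coe]
  rw [forall_congr' hdet]
  rw [← aux_core 𝒜 hfin m Lv hc (DirectSum.decompose 𝒜 G (m+1))]
  constructor
  · rintro ⟨y, hy⟩
    exact ⟨(y : A), y.2, by rw [← auxMul_apply 𝒜 m Lv y, hy]⟩
  · rintro ⟨y, hy, hy2⟩
    exact ⟨⟨y, hy⟩, Subtype.ext (by rw [auxMul_apply]; exact hy2)⟩

theorem stmt_11 (K A : Type*) [Field K] [Ring A] [IsDomain A] [Algebra K A]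
    (𝒜 : ℕ → Submodule K A) [GradedAlgebra 𝒜]
    (hfin : ∀ n, FiniteDimensional K (𝒜 n))
    (hprime : ∀ L : A, L ∈ 𝒜 1 → L ≠ 0 →
      (Module.annihilator A (A ⧸ (Ideal.span {L} : Ideal A))).IsPrime)
    (d : ℕ) (b : Module.Basis (Fin d) K (𝒜 1)) :
    -- continuity into Spec A with the Jacobson/Zariski topology: the preimage of each
    -- closed set V(I) is closed in A(1) \ {0}
    ∀ I : Ideal A, ∃ J : Ideal (MvPolynomial (Fin d) K),
      {c : Fin d → K | (∑ i, c i • b i : 𝒜 1) ≠ 0 ∧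
          I ≤ Module.annihilator A (A ⧸ (Ideal.span {((∑ i, c i • b i : 𝒜 1) : A)} : Ideal A))} =
        MvPolynomial.zeroLocus K J ∩ {c : Fin d → K | (∑ i, c i • b i : 𝒜 1) ≠ 0} := by
  classical
  intro I
  refine ⟨⨆ (F : A) (_ : F ∈ I) (x : A), auxIdealG 𝒜 hfin b (F * x), ?_⟩
  ext c
  simp only [Set.mem_setOf_eq, Set.mem_inter_iff, MvPolynomial.mem_zeroLocus_iff]
  set Lv : 𝒜 1 := ∑ i, c i • b i with hLv
  by_cases hc : Lv = 0
  · simp [hc]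
  · have hc' : (Lv : A) ≠ 0 := fun h => hc (ZeroMemClass.coe_eq_zero.mp h)
    have hann : ∀ F : A,
        (F ∈ Module.annihilator A (A ⧸ (Ideal.span {(Lv : A)} : Ideal A)) ↔
          ∀ x : A, ∃ a : A, a * (Lv : A) = F * x) := by
      intro F
      rw [Module.mem_annihilator]
      constructor
      · intro h x
        have h2 := h (Submodule.Quotient.mk x)
        rw [← Submodule.Quotient.mk_smul, Submodule.Quotient.mk_eq_zero, smul_eq_mul] at h2
        obtain ⟨a, ha⟩ := Submodule.mem_span_singleton.mp h2
        exact ⟨a, by rw [← ha]; rfl⟩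
      · intro h z
        obtain ⟨x, rfl⟩ := Submodule.Quotient.mk_surjective _ z
        rw [← Submodule.Quotient.mk_smul, Submodule.Quotient.mk_eq_zero, smul_eq_mul]
        obtain ⟨a, ha⟩ := h x
        exact Submodule.mem_span_singleton.mpr ⟨a, by rw [smul_eq_mul, ha]⟩
    constructor
    · rintro ⟨hne, hIle⟩
      refine ⟨?_, hne⟩
      intro p hp
      have hJ : (⨆ (F : A) (_ : F ∈ I) (x : A), auxIdealG 𝒜 hfin b (F * x)) ≤
          RingHom.ker (MvPolynomial.eval c) := by
        refine iSup_le fun F => iSup_le fun hF => iSup_le fun x => ?_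
        rw [auxIdealG_spec 𝒜 hfin b c hc' (F * x)]
        exact (hann F).mp (hIle hF) x
      exact hJ hp
    · rintro ⟨hzl, hne⟩
      refine ⟨hne, fun F hF => ?_⟩
      rw [hann F]
      intro x
      rw [← auxIdealG_spec 𝒜 hfin b c hc' (F * x)]
      intro p hp
      refine hzl p ?_
      exact (show auxIdealG 𝒜 hfin b (F * x) ≤ ⨆ (F : A) (_ : F ∈ I) (x : A), auxIdealG 𝒜 hfin b (F * x) from le_iSup_of_le F (le_iSup_of_le hF
        (le_iSup (fun x => auxIdealG 𝒜 hfin b (F * x)) x))) hp
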